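/- Let R be a commutative artinian principal ideal ring. Then R is injective as a module over itself. -/

import Mathlib

open Ideal

/-- The key divisibility property: whenever the annihilator of `a` is contained in
the annihilator of `b`, `a` divides `b`. -/
def DvdOfAnnLe (R : Type*) [CommRing R] : Prop :=
  ∀ a b : R, (∀ x, x * a = 0 → x * b = 0) → ∃ r, b = r * a

/-- The property transfers along ring isomorphisms. -/
theorem dvdOfAnnLe_of_equiv {R S : Type*} [CommRing R] [CommRing S] (e : R ≃+* S)
    (hS : DvdOfAnnLe S) : DvdOfAnnLe R := by
  intro a b h
  obtain ⟨r, hr⟩ := hS (e a) (e b) (fun x hx => by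
    have : e.symm x * a = 0 := by
      apply e.injective
      simpa using hx
    have := h _ this
    have := congrArg e this
    simpa using this)
  exact ⟨e.symm r, by
    apply e.injective
    simpa using hr⟩

/-- The property passes to (arbitrary) products. -/
theorem dvdOfAnnLe_pi {ι : Type*} (S : ι → Type*) [∀ i, CommRing (S i)]
    (hS : ∀ i, DvdOfAnnLe (S i)) : DvdOfAnnLe (∀ i, S i) := by
  classical
  intro a b h
  have key : ∀ i, ∃ r : S i, b i = r * a i := by
    intro i
    apply hS i (a i) (b i)
    intro x hx
    have h0 : (Pi.single i x : ∀ i, S i) * a = 0 := by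
      funext j
      by_cases hj : j = i
      · subst hj; simpa using hx
      · simp [Pi.single_eq_of_ne hj]
    have := congrFun (h _ h0) i
    simpa using this
  choose r hr using key
  exact ⟨r, funext hr⟩

/-- In a local artinian principal ideal ring the key property holds. -/
theorem dvdOfAnnLe_of_local (R : Type*) [CommRing R] [IsArtinianRing R]
    [IsPrincipalIdealRing R] [IsLocalRing R] : DvdOfAnnLe R := by
  classical
  intro a b hab
  obtain ⟨π, hπ⟩ := (IsPrincipalIdealRing.principal (IsLocalRing.maximalIdeal R)).principal
  -- π is nilpotent
  have hnil : ∃ n, π ^ n = 0 := by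
    obtain ⟨n, hn⟩ := IsArtinianRing.isNilpotent_jacobson_bot (R := R)
    refine ⟨n, ?_⟩
    have hπm : π ∈ IsLocalRing.maximalIdeal R := by
      rw [hπ]; exact Ideal.subset_span rfl
    have : π ^ n ∈ (Ideal.jacobson (⊥ : Ideal R)) ^ n := by
      rw [IsLocalRing.jacobson_eq_maximalIdeal ⊥ bot_ne_top]
      exact Ideal.pow_mem_pow hπm n
    rw [hn] at this
    simpa using this
  set n := Nat.find hnil with hn_def
  have hn : π ^ n = 0 := Nat.find_spec hnil
  have hn_min : ∀ k, π ^ k = 0 → n ≤ k := fun k hk => Nat.find_min' hnil hk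
  -- every nonzero element is a unit times a power of π
  have decomp : ∀ c : R, c ≠ 0 → ∃ (u : Rˣ) (j : ℕ), j < n ∧ c = ↑u * π ^ j := by
    intro c hc
    have hex : ∃ j, c ∉ Ideal.span ({π ^ j} : Set R) := by
      refine ⟨n, ?_⟩
      rw [hn]
      simp [Ideal.mem_span_singleton, zero_dvd_iff, hc]
    set j0 := Nat.find hex with hj0_def
    have hj0 : c ∉ Ideal.span ({π ^ j0} : Set R) := Nat.find_spec hex
    have hj0_pos : j0 ≠ 0 := by
      intro h0
      apply hj0
      rw [h0]
      simp [Ideal.mem_span_singleton]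
    have hj0n : j0 ≤ n := Nat.find_le (by
      rw [hn]; simp [Ideal.mem_span_singleton, zero_dvd_iff, hc])
    set j := j0 - 1 with hj_def
    have hjj : j + 1 = j0 := Nat.succ_pred_eq_of_ne_zero hj0_pos
    have hjn : j < n := by omega
    have hcj : c ∈ Ideal.span ({π ^ j} : Set R) := by
      by_contra hcon
      have := Nat.find_min' hex hcon
      omega
    rw [Ideal.mem_span_singleton] at hcj
    obtain ⟨x, hx⟩ := hcj
    have hxu : IsUnit x := by
      by_contra hxu
      have hxm : x ∈ IsLocalRing.maximalIdeal R := hxu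
      rw [hπ] at hxm
      obtain ⟨y, hy⟩ := Submodule.mem_span_singleton.mp hxm
      apply hj0
      rw [← hjj]
      apply Ideal.mem_span_singleton.mpr
      exact ⟨y, by rw [hx, ← hy, smul_eq_mul]; ring⟩
    obtain ⟨u, hu⟩ := hxu
    exact ⟨u, j, hjn, by rw [hx, hu]; ring⟩
  -- main argument
  by_cases hb : b = 0
  · exact ⟨0, by simp [hb]⟩
  by_cases ha : a = 0
  · exfalso
    apply hb
    have := hab 1 (by simp [ha])
    simpa using this
  obtain ⟨u, j, hjn, hau⟩ := decomp a ha
  obtain ⟨v, i, hin, hbv⟩ := decomp b hb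
  have h1 : π ^ (n - j) * a = 0 := by
    rw [hau]
    have : π ^ (n - j) * π ^ j = 0 := by
      rw [← pow_add]
      have : n - j + j = n := by omega
      rw [this, hn]
    calc π ^ (n - j) * (↑u * π ^ j) = ↑u * (π ^ (n - j) * π ^ j) := by ring
    _ = 0 := by rw [this, mul_zero]
  have h2 : π ^ (n - j) * b = 0 := hab _ h1
  have h3 : π ^ (n - j + i) = 0 := by
    have : (↑(v⁻¹) : R) * (π ^ (n - j) * b) = π ^ (n - j + i) := by
      rw [hbv, pow_add]
      calc (↑(v⁻¹) : R) * (π ^ (n - j) * (↑v * π ^ i))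
          = (↑(v⁻¹) * ↑v) * (π ^ (n - j) * π ^ i) := by ring
        _ = π ^ (n - j) * π ^ i := by rw [v.inv_mul, one_mul]
    rw [← this, h2, mul_zero]
  have hij : j ≤ i := by
    have := hn_min _ h3
    omega
  refine ⟨↑v * π ^ (i - j) * ↑(u⁻¹), ?_⟩
  rw [hbv, hau]
  calc (↑v * π ^ i : R) = ↑v * π ^ (i - j) * (π ^ j) := by
        rw [mul_assoc, ← pow_add]
        congr 2
        omega
    _ = ↑v * π ^ (i - j) * ((↑(u⁻¹) * ↑u) * π ^ j) := by rw [u.inv_mul, one_mul]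
    _ = ↑v * π ^ (i - j) * ↑(u⁻¹) * (↑u * π ^ j) := by ring

/-- The quotient of a ring by a positive power of a maximal ideal is local. -/
theorem isLocalRing_quotient_pow_maximal {R : Type*} [CommRing R] (m : Ideal R)
    [hm : m.IsMaximal] (k : ℕ) (hk : k ≠ 0) : IsLocalRing (R ⧸ m ^ k) := by
  have hne : m ^ k ≠ ⊤ := by
    intro h
    exact hm.ne_top (top_le_iff.mp (h ▸ Ideal.pow_le_self hk))
  have : Nontrivial (R ⧸ m ^ k) := Ideal.Quotient.nontrivial_iff.mpr hne
  apply IsLocalRing.of_isUnit_or_isUnit_one_sub_self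
  intro a
  obtain ⟨x, rfl⟩ := Ideal.Quotient.mk_surjective a
  have key : ∀ y : R, y ∉ m → IsUnit (Ideal.Quotient.mk (m ^ k) y) := by
    intro y hy
    have hsup : Ideal.span ({y} : Set R) ⊔ m ^ k = ⊤ := by
      by_contra hcon
      obtain ⟨m', hm', hle⟩ := Ideal.exists_le_maximal _ hcon
      have h1 : m ^ k ≤ m' := le_trans le_sup_right hle
      have h2 : m ≤ m' := hm'.isPrime.le_of_pow_le h1
      have := hm.eq_of_le hm'.ne_top h2
      apply hy
      rw [this]
      exact hle (Ideal.mem_sup_left (Ideal.subset_span rfl))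
    obtain ⟨p, hp, q, hq, hpq⟩ := Submodule.mem_sup.mp (hsup ▸ Submodule.mem_top (x := (1 : R)))
    rw [Ideal.mem_span_singleton] at hp
    obtain ⟨c, hc⟩ := hp
    refine IsUnit.of_mul_eq_one (Ideal.Quotient.mk (m ^ k) c) ?_
    have : Ideal.Quotient.mk (m ^ k) q = 0 := Ideal.Quotient.eq_zero_iff_mem.mpr hq
    have h1 : Ideal.Quotient.mk (m ^ k) (p + q) = 1 := by rw [hpq]; rfl
    rw [map_add, this, add_zero, hc, _root_.map_mul] at h1
    rw [mul_comm] at h1 ⊢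
    exact h1
  by_cases hx : x ∈ m
  · right
    have : (1 : R ⧸ m ^ k) - Ideal.Quotient.mk (m ^ k) x = Ideal.Quotient.mk (m ^ k) (1 - x) := by
      simp
    rw [this]
    apply key
    intro h1
    have hone : (1 : R) ∈ m := by
      have := m.add_mem h1 hx
      simpa using this
    exact hm.ne_top ((Ideal.eq_top_iff_one m).mpr hone)
  · left
    exact key x hx

theorem dvdOfAnnLe_of_artinian_pir (R : Type*) [CommRing R] [IsArtinianRing R]
    [IsPrincipalIdealRing R] : DvdOfAnnLe R := by
  classical
  -- the set of maximal ideals is finite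
  have hfin : Finite {I : Ideal R | I.IsMaximal} := (IsArtinianRing.setOfPred_isMaximal_finite R).to_subtype
  set σ := {I : Ideal R | I.IsMaximal}
  have : Fintype σ := Fintype.ofFinite σ
  -- generators of the maximal ideals
  have hgen : ∀ i : σ, ∃ π : R, i.1 = Ideal.span {π} := fun i =>
    (IsPrincipalIdealRing.principal i.1).principal
  choose π hπ using hgen
  -- a uniform nilpotency exponent
  obtain ⟨n0, hn0⟩ := IsArtinianRing.isNilpotent_jacobson_bot (R := R)
  set k := n0 + 1 with hk_def
  set f : σ → Ideal R := fun i => i.1 ^ k with hf_def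
  -- pairwise coprimality
  have hcop : Pairwise (Function.onFun IsCoprime f) := by
    intro i j hij
    have h1 : IsCoprime i.1 j.1 :=
      Ideal.isCoprime_iff_sup_eq.mpr (i.2.coprime_of_ne j.2 (by
        simpa [Ne, Subtype.ext_iff] using hij))
    exact h1.pow
  -- the infimum of the f i is ⊥
  have hinf : ⨅ i, f i = ⊥ := by
    have hspan : ∀ i : σ, f i = Ideal.span ({π i ^ k} : Set R) := by
      intro i
      show i.1 ^ k = Ideal.span ({π i ^ k} : Set R)
      rw [hπ i, Ideal.span_singleton_pow]
    have hcop' : ∀ (i j : σ), i ≠ j → IsCoprime (π i ^ k) (π j ^ k) := by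
      intro i j hij
      have := hcop hij
      rw [Function.onFun, hspan i, hspan j, Ideal.isCoprime_span_singleton_iff] at this
      exact this
    have : ⨅ i, f i = Ideal.span {∏ i : σ, π i ^ k} := by
      calc ⨅ i, f i = ⨅ i, Ideal.span ({π i ^ k} : Set R) := by
            exact iInf_congr hspan
        _ = Ideal.span {∏ i : σ, π i ^ k} := Ideal.iInf_span_singleton hcop'
    rw [this]
    have hprod : (∏ i : σ, π i ^ k) = (∏ i : σ, π i) ^ k := by
      rw [Finset.prod_pow]
    have hmem : (∏ i : σ, π i) ∈ Ideal.jacobson (⊥ : Ideal R) := by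
      rw [Ideal.jacobson]
      apply Submodule.mem_sInf.mpr
      rintro J ⟨-, hJmax⟩
      have : (⟨J, hJmax⟩ : σ) ∈ (Finset.univ : Finset σ) := Finset.mem_univ _
      have hdvd : π ⟨J, hJmax⟩ ∣ ∏ i : σ, π i := Finset.dvd_prod_of_mem _ this
      have : ∏ i : σ, π i ∈ Ideal.span ({π ⟨J, hJmax⟩} : Set R) :=
        Ideal.mem_span_singleton.mpr hdvd
      rwa [← hπ ⟨J, hJmax⟩] at this
    have hzero : (∏ i : σ, π i) ^ k = 0 := by
      have h1 : (∏ i : σ, π i) ^ k ∈ (Ideal.jacobson (⊥ : Ideal R)) ^ k :=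
        Ideal.pow_mem_pow hmem k
      have h2 : (Ideal.jacobson (⊥ : Ideal R)) ^ k ≤ (Ideal.jacobson (⊥ : Ideal R)) ^ n0 :=
        Ideal.pow_le_pow_right (by omega)
      rw [hn0] at h2
      exact Ideal.mem_bot.mp (h2 h1)
    rw [hprod, hzero]
    exact Ideal.span_singleton_eq_bot.mpr rfl
  -- CRT: R ≃ ∏ R ⧸ f i
  have e : R ≃+* ∀ i : σ, R ⧸ f i :=
    ((RingEquiv.quotientBot R).symm.trans (Ideal.quotEquivOfEq hinf.symm)).trans
      (Ideal.quotientInfRingEquivPiQuotient f hcop)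
  apply dvdOfAnnLe_of_equiv e
  apply dvdOfAnnLe_pi
  intro i
  have : IsMaximal i.1 := i.2
  have hloc : IsLocalRing (R ⧸ f i) := isLocalRing_quotient_pow_maximal i.1 k (by omega)
  have hpir : IsPrincipalIdealRing (R ⧸ f i) :=
    IsPrincipalIdealRing.of_surjective (Ideal.Quotient.mk (f i)) Ideal.Quotient.mk_surjective
  exact dvdOfAnnLe_of_local (R ⧸ f i)

/-- Let `R` be a commutative artinian principal ideal ring. Then `R` is injective as a
module over itself. -/
theorem artinian_pir_self_injective (R : Type*) [CommRing R] [IsArtinianRing R]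
    [IsPrincipalIdealRing R] : Module.Injective R R := by
  apply Module.Baer.injective
  intro I g
  obtain ⟨a, ha⟩ := (IsPrincipalIdealRing.principal I).principal
  have haI : a ∈ I := by rw [ha]; exact Ideal.subset_span rfl
  set b := g ⟨a, haI⟩ with hb
  have hann : ∀ x, x * a = 0 → x * b = 0 := by
    intro x hx
    have : x • (⟨a, haI⟩ : I) = (0 : I) := by
      apply Subtype.ext
      simpa [smul_eq_mul] using hx
    calc x * b = x • g ⟨a, haI⟩ := by rw [smul_eq_mul]
      _ = g (x • (⟨a, haI⟩ : I)) := (map_smul g x _).symm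
      _ = 0 := by rw [this, map_zero]
  obtain ⟨r, hr⟩ := dvdOfAnnLe_of_artinian_pir R a b hann
  refine ⟨LinearMap.toSpanSingleton R R r, ?_⟩
  intro x hx
  have hx' : x ∈ Submodule.span R {a} := ha ▸ hx
  obtain ⟨s, hs⟩ := Submodule.mem_span_singleton.mp hx'
  have hxI : (⟨x, hx⟩ : I) = s • (⟨a, haI⟩ : I) := by
    apply Subtype.ext
    simpa [smul_eq_mul] using hs.symm
  calc LinearMap.toSpanSingleton R R r x = x • r := rfl
    _ = s • b := by
        rw [smul_eq_mul, smul_eq_mul, hr, ← hs, smul_eq_mul]; ring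
    _ = g _ := by rw [hxI, map_smul]
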